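/- If f_ρ is B-Lipschitz (Euclidean norm) and bounded by B, y ∈ [-M,M] a.s., and the marginal distortion bound ∫ g dρ_X ≤ ‖J_ρ‖ ∫ g dx holds for nonnegative g, then the robustness gap of the regression function satisfies E^δ(f_ρ) - E(f_ρ) ≤ (2B + 2M) ‖J_ρ‖ B √d δ. -/

import Mathlib

open MeasureTheory Set Finset

def advBall {d : ℕ} (X : Set (Fin d → ℝ)) (δ : ℝ) (x : Fin d → ℝ) : Set (Fin d → ℝ) :=
  {x' | x' ∈ X ∧ ‖x' - x‖ ≤ δ}

/-- if the regression function `f_ρ` is `B`-Lipschitz (Euclidean norm)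
and bounded by `B`, labels lie in `[-M,M]` a.s., and the marginal distortion bound
`∫ g dρ_X ≤ ‖J_ρ‖ ∫ g dx` holds for nonnegative `g`, then the robustness gap of the
regression function satisfies `E^δ(f_ρ) - E(f_ρ) ≤ (2B + 2M) ‖J_ρ‖ B √d δ`. -/
theorem regression_robust_gap_bound {d : ℕ} (X : Set (Fin d → ℝ))
    (hXcube : ∀ x ∈ X, ∀ k, x k ∈ Icc (0 : ℝ) 1)
    (ρ : Measure ((Fin d → ℝ) × ℝ)) [IsProbabilityMeasure ρ]
    (ρX : Measure (Fin d → ℝ)) (hmap : ρ.map Prod.fst = ρX)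
    (fρ : (Fin d → ℝ) → ℝ) (B M J δ : ℝ) (hδ : 0 ≤ δ) (hJ0 : 0 ≤ J)
    (hB : ∀ x, |fρ x| ≤ B) (hmf : Measurable fρ)
    (hLip : ∀ u v : Fin d → ℝ,
      |fρ u - fρ v| ≤ B * Real.sqrt (∑ k : Fin d, (u k - v k) ^ 2))
    (hM : ∀ᵐ z ∂ρ, |z.2| ≤ M)
    (hρ : ∀ᵐ z ∂ρ, z.1 ∈ X)
    (hJ : ∀ g : (Fin d → ℝ) → ℝ, Measurable g → (∀ x, 0 ≤ g x) →
      ∫ x, g x ∂ρX ≤ J * ∫ x in X, g x)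
    (hmeasg : Measurable (fun x => ⨆ x' ∈ advBall X δ x, |fρ x' - fρ x|))
    (h1 : Integrable (fun z : (Fin d → ℝ) × ℝ =>
      ⨆ x' ∈ advBall X δ z.1, (fρ x' - z.2) ^ 2) ρ)
    (h2 : Integrable (fun z : (Fin d → ℝ) × ℝ => (fρ z.1 - z.2) ^ 2) ρ) :
    (∫ z, ⨆ x' ∈ advBall X δ z.1, (fρ x' - z.2) ^ 2 ∂ρ) -
      (∫ z, (fρ z.1 - z.2) ^ 2 ∂ρ) ≤
    (2 * B + 2 * M) * J * (B * Real.sqrt d * δ) := by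
  have hB0 : 0 ≤ B := le_trans (abs_nonneg _) (hB 0)
  have hne : Filter.NeBot (ae ρ) := ae_neBot.mpr (IsProbabilityMeasure.ne_zero ρ)
  obtain ⟨z₀, hz₀⟩ := hM.exists
  have hM0 : 0 ≤ M := le_trans (abs_nonneg _) hz₀
  set C : ℝ := (2 * B + 2 * M) * (B * Real.sqrt d * δ) with hCdef
  have hsd : 0 ≤ Real.sqrt d := Real.sqrt_nonneg _
  have hC0 : 0 ≤ C := by positivity
  -- J ≥ 1
  have hρX : IsProbabilityMeasure ρX := by
    rw [← hmap]; exact Measure.isProbabilityMeasure_map measurable_fst.aemeasurable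
  have hJ1 : 1 ≤ J := by
    have h := hJ (fun _ => 1) measurable_const (fun _ => zero_le_one)
    rw [integral_const, integral_const] at h
    simp only [measureReal_def, measure_univ, ENNReal.toReal_one, smul_eq_mul, one_mul, mul_one] at h
    have hvol : (volume.restrict X) Set.univ ≤ 1 := by
      rw [Measure.restrict_apply_univ]
      calc volume X ≤ volume (Set.pi Set.univ (fun _ : Fin d => Icc (0:ℝ) 1)) := by
            apply measure_mono
            intro x hx
            rw [Set.mem_pi]
            exact fun k _ => hXcube x hx k
        _ = 1 := by rw [volume_pi_pi]; simp
    have hvol' : ((volume.restrict X) Set.univ).toReal ≤ 1 :=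
      ENNReal.toReal_le_of_le_ofReal zero_le_one (by simpa using hvol)
    calc (1:ℝ) ≤ J * ((volume.restrict X) Set.univ).toReal := h
      _ ≤ J * 1 := mul_le_mul_of_nonneg_left hvol' hJ0
      _ = J := mul_one J
  -- pointwise a.e. bound
  have hpt : ∀ z : (Fin d → ℝ) × ℝ, z.1 ∈ X → |z.2| ≤ M →
      (⨆ x' ∈ advBall X δ z.1, (fρ x' - z.2) ^ 2) ≤ (fρ z.1 - z.2) ^ 2 + C := by
    intro z hzX hzM
    have hRHS0 : 0 ≤ (fρ z.1 - z.2) ^ 2 + C := by positivity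
    refine Real.iSup_le (fun x' => Real.iSup_le (fun hx' => ?_) hRHS0) hRHS0
    obtain ⟨hx'X, hx'ball⟩ := hx'
    -- Lipschitz bound: |fρ x' - fρ z.1| ≤ B * √d * δ
    have hcoord : ∀ k, (x' k - z.1 k) ^ 2 ≤ δ ^ 2 := by
      intro k
      have h1 : |(x' - z.1) k| ≤ ‖x' - z.1‖ := norm_le_pi_norm (x' - z.1) k
      have h2 : |x' k - z.1 k| ≤ δ := by
        simpa [Pi.sub_apply] using h1.trans hx'ball
      calc (x' k - z.1 k) ^ 2 = |x' k - z.1 k| ^ 2 := (sq_abs _).symm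
        _ ≤ δ ^ 2 := by
            apply pow_le_pow_left₀ (abs_nonneg _) h2
    have hsum : (∑ k : Fin d, (x' k - z.1 k) ^ 2) ≤ d * δ ^ 2 := by
      calc (∑ k : Fin d, (x' k - z.1 k) ^ 2) ≤ ∑ _k : Fin d, δ ^ 2 :=
            Finset.sum_le_sum (fun k _ => hcoord k)
        _ = d * δ ^ 2 := by simp [mul_comm]
    have hsqrt : Real.sqrt (∑ k : Fin d, (x' k - z.1 k) ^ 2) ≤ Real.sqrt d * δ := by
      calc Real.sqrt (∑ k : Fin d, (x' k - z.1 k) ^ 2) ≤ Real.sqrt (d * δ ^ 2) :=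
            Real.sqrt_le_sqrt hsum
        _ = Real.sqrt d * δ := by
            rw [Real.sqrt_mul (by positivity), Real.sqrt_sq hδ]
    have hlip : |fρ x' - fρ z.1| ≤ B * (Real.sqrt d * δ) :=
      (hLip x' z.1).trans (mul_le_mul_of_nonneg_left hsqrt hB0)
    -- sum bound
    have hsum2 : |(fρ x' - z.2) + (fρ z.1 - z.2)| ≤ 2 * B + 2 * M := by
      have := hB x'
      have := hB z.1
      have h1 : |(fρ x' - z.2) + (fρ z.1 - z.2)| ≤ |fρ x'| + |fρ z.1| + 2 * |z.2| := by
        calc |(fρ x' - z.2) + (fρ z.1 - z.2)| ≤ |fρ x'| + |fρ z.1 - 2 * z.2| := by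
              have : (fρ x' - z.2) + (fρ z.1 - z.2) = fρ x' + (fρ z.1 - 2 * z.2) := by ring
              rw [this]; exact abs_add_le _ _
          _ ≤ |fρ x'| + (|fρ z.1| + |2 * z.2|) := by
              gcongr; exact abs_sub _ _
          _ = |fρ x'| + |fρ z.1| + 2 * |z.2| := by rw [abs_mul]; simp [abs_two]; ring
      linarith [hB x', hB z.1]
    have key : (fρ x' - z.2) ^ 2 - (fρ z.1 - z.2) ^ 2
        = (fρ x' - fρ z.1) * ((fρ x' - z.2) + (fρ z.1 - z.2)) := by ring
    have hbd : (fρ x' - z.2) ^ 2 - (fρ z.1 - z.2) ^ 2 ≤ C := by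
      rw [key]
      calc (fρ x' - fρ z.1) * ((fρ x' - z.2) + (fρ z.1 - z.2))
          ≤ |(fρ x' - fρ z.1) * ((fρ x' - z.2) + (fρ z.1 - z.2))| := le_abs_self _
        _ = |fρ x' - fρ z.1| * |(fρ x' - z.2) + (fρ z.1 - z.2)| := abs_mul _ _
        _ ≤ (B * (Real.sqrt d * δ)) * (2 * B + 2 * M) := by
            apply mul_le_mul hlip hsum2 (abs_nonneg _) (by positivity)
        _ = C := by rw [hCdef]; ring
    linarith
  -- integrate
  have hmono : (∫ z, ⨆ x' ∈ advBall X δ z.1, (fρ x' - z.2) ^ 2 ∂ρ)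
      ≤ ∫ z, ((fρ z.1 - z.2) ^ 2 + C) ∂ρ := by
    apply integral_mono_ae h1 (h2.add (integrable_const C))
    filter_upwards [hρ, hM] with z hzX hzM
    exact hpt z hzX hzM
  have heq : ∫ z, ((fρ z.1 - z.2) ^ 2 + C) ∂ρ
      = (∫ z, (fρ z.1 - z.2) ^ 2 ∂ρ) + C := by
    rw [integral_add h2 (integrable_const C), integral_const]
    simp
  have hfinal : (∫ z, ⨆ x' ∈ advBall X δ z.1, (fρ x' - z.2) ^ 2 ∂ρ) -
      (∫ z, (fρ z.1 - z.2) ^ 2 ∂ρ) ≤ C := by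
    rw [heq] at hmono; linarith
  have hCJ : C ≤ (2 * B + 2 * M) * J * (B * Real.sqrt d * δ) := by
    have h1 : (1:ℝ) * C ≤ J * C := mul_le_mul_of_nonneg_right hJ1 hC0
    calc C = 1 * C := (one_mul C).symm
      _ ≤ J * C := h1
      _ = (2 * B + 2 * M) * J * (B * Real.sqrt d * δ) := by rw [hCdef]; ring
  linarith
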